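/- For the LRU invariant with B = 2, the stationary hit probability of object n is h_n = λ_n/Λ + Σ_{m ≠ n} λ_m λ_n/(Λ(Λ - λ_m)), and if λ_m > λ_n then h_m > h_n. -/

import Mathlib

open Finset

/-- LRU hit probability of object `n` for cache size `B = 2`:
`h_n = Σ_{(a,b) : n ∈ {a,b}} π(a,b)` with `π(a,b) = λ_a λ_b/(Λ(Λ-λ_a))`. -/
noncomputable def hitLRU2 (N : ℕ) (lam : Fin N → ℝ) (Λ : ℝ) (n : Fin N) : ℝ :=
  ∑ a : Fin N, ∑ b ∈ Finset.univ.erase a,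
    if n = a ∨ n = b then lam a * lam b / (Λ * (Λ - lam a)) else 0

/-- For the LRU invariant with `B = 2`, the stationary hit probability is
`h_n = λ_n/Λ + Σ_{m≠n} λ_m λ_n/(Λ(Λ-λ_m))`, and it is strictly increasing in
popularity: `λ_n < λ_m` implies `h_n < h_m`. -/
theorem lru_B2_hit_prob (N : ℕ) (hN : 3 ≤ N)
    (lam : Fin N → ℝ) (hlam : ∀ n, 0 < lam n)
    (Λ : ℝ) (hΛ : Λ = ∑ i, lam i) :
    (∀ n : Fin N, hitLRU2 N lam Λ n =
        lam n / Λ + ∑ m ∈ Finset.univ.erase n, lam m * lam n / (Λ * (Λ - lam m))) ∧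
      (∀ m n : Fin N, lam n < lam m → hitLRU2 N lam Λ n < hitLRU2 N lam Λ m) := by
  have hΛpos : 0 < Λ := by
    rw [hΛ]
    exact Finset.sum_pos (fun i _ => hlam i) ⟨⟨0, by omega⟩, mem_univ _⟩
  have hpair : ∀ m n : Fin N, m ≠ n → lam m + lam n < Λ := by
    intro m n hmn
    have hmem : m ∈ univ.erase n := mem_erase.mpr ⟨hmn, mem_univ m⟩
    have h1 : lam n + ∑ i ∈ univ.erase n, lam i = Λ := by
      rw [hΛ]; exact Finset.add_sum_erase _ _ (mem_univ n)
    have h2 : lam m + ∑ i ∈ (univ.erase n).erase m, lam i = ∑ i ∈ univ.erase n, lam i :=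
      Finset.add_sum_erase _ _ hmem
    have hT : ((univ.erase n).erase m).Nonempty := by
      apply Finset.card_pos.mp
      rw [Finset.card_erase_of_mem hmem, Finset.card_erase_of_mem (mem_univ n),
        Finset.card_univ, Fintype.card_fin]
      omega
    have hpos : 0 < ∑ i ∈ (univ.erase n).erase m, lam i :=
      Finset.sum_pos (fun i _ => hlam i) hT
    linarith
  have hlt : ∀ k : Fin N, lam k < Λ := by
    intro k
    obtain ⟨j, hj⟩ : ∃ j : Fin N, j ≠ k := by
      by_cases h : k = ⟨0, by omega⟩
      · exact ⟨⟨1, by omega⟩, by simp [h, Fin.ext_iff]⟩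
      · exact ⟨⟨0, by omega⟩, fun hc => h hc.symm⟩
    have := hpair j k hj
    nlinarith [hlam j]
  have hsub : ∀ k : Fin N, 0 < Λ - lam k := fun k => by linarith [hlt k]
  have hΛne : Λ ≠ 0 := ne_of_gt hΛpos
  have key : ∀ n : Fin N, hitLRU2 N lam Λ n =
      lam n / Λ + ∑ m ∈ Finset.univ.erase n, lam m * lam n / (Λ * (Λ - lam m)) := by
    intro n
    unfold hitLRU2
    rw [← Finset.add_sum_erase univ _ (mem_univ n)]
    congr 1
    · have h1 : (∑ b ∈ univ.erase n,
          if n = n ∨ n = b then lam n * lam b / (Λ * (Λ - lam n)) else 0) =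
          ∑ b ∈ univ.erase n, lam n * lam b / (Λ * (Λ - lam n)) :=
        Finset.sum_congr rfl (by intro b _; simp)
      have hsum : ∑ b ∈ univ.erase n, lam b = Λ - lam n := by
        have := Finset.add_sum_erase univ lam (mem_univ n)
        rw [← hΛ] at this
        linarith
      rw [h1, ← Finset.sum_div, ← Finset.mul_sum, hsum, mul_comm Λ (Λ - lam n),
        mul_comm (lam n) (Λ - lam n)]
      exact mul_div_mul_left _ _ (ne_of_gt (hsub n))
    · apply Finset.sum_congr rfl
      intro a ha
      have hna : ¬ n = a := fun h => (mem_erase.mp ha).1 h.symm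
      have h2 : (∑ b ∈ univ.erase a,
          if n = a ∨ n = b then lam a * lam b / (Λ * (Λ - lam a)) else 0) =
          ∑ b ∈ univ.erase a,
            if n = b then lam a * lam b / (Λ * (Λ - lam a)) else 0 :=
        Finset.sum_congr rfl (by intro b _; simp [hna])
      rw [h2, Finset.sum_ite_eq, if_pos (mem_erase.mpr ⟨hna, mem_univ n⟩)]
  refine ⟨key, ?_⟩
  intro m n hmn'
  have hne : m ≠ n := fun h => by subst h; exact lt_irrefl _ hmn'
  rw [key m, key n]
  have hmem_n : m ∈ univ.erase n := mem_erase.mpr ⟨hne, mem_univ m⟩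
  have hmem_m : n ∈ univ.erase m := mem_erase.mpr ⟨hne.symm, mem_univ n⟩
  rw [← Finset.add_sum_erase _ _ hmem_n, ← Finset.add_sum_erase _ _ hmem_m,
    Finset.erase_right_comm (a := n) (b := m)]
  have hTne : ((univ.erase m).erase n).Nonempty := by
    apply Finset.card_pos.mp
    rw [Finset.card_erase_of_mem hmem_m, Finset.card_erase_of_mem (mem_univ m),
      Finset.card_univ, Fintype.card_fin]
    omega
  have hS : ∑ k ∈ (univ.erase m).erase n, lam k * lam n / (Λ * (Λ - lam k)) <
      ∑ k ∈ (univ.erase m).erase n, lam k * lam m / (Λ * (Λ - lam k)) := by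
    apply Finset.sum_lt_sum_of_nonempty hTne
    intro k _
    have hd : 0 < Λ * (Λ - lam k) := mul_pos hΛpos (hsub k)
    have hk := hlam k
    apply div_lt_div_of_pos_right ?_ hd
    nlinarith
  have hrest : lam n / Λ + lam m * lam n / (Λ * (Λ - lam m)) ≤
      lam m / Λ + lam n * lam m / (Λ * (Λ - lam n)) := by
    rw [← sub_nonneg]
    have hEq : lam m / Λ + lam n * lam m / (Λ * (Λ - lam n)) -
        (lam n / Λ + lam m * lam n / (Λ * (Λ - lam m))) =
        (lam m - lam n) * ((Λ - lam n) * (Λ - lam m) - lam m * lam n) /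
          (Λ * (Λ - lam n) * (Λ - lam m)) := by
      have hn1 : Λ - lam n ≠ 0 := ne_of_gt (hsub n)
      have hm1 : Λ - lam m ≠ 0 := ne_of_gt (hsub m)
      field_simp
      ring
    rw [hEq]
    apply div_nonneg
    · apply mul_nonneg (by linarith)
      have h1 : lam m ≤ Λ - lam n := by linarith [hpair m n hne]
      have h2 : lam n ≤ Λ - lam m := by linarith [hpair m n hne]
      nlinarith [hlam m, hlam n]
    · exact le_of_lt (mul_pos (mul_pos hΛpos (hsub n)) (hsub m))
  linarith
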